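/- arXiv:0906.3469 — 2 statements merged into one kernel-verified Lean document; each statement's English description precedes it below -/
import Mathlib

section
/- Let n ≥ 4 be an even integer, k ≥ 2, 1 ≤ i < j ≤ k, and u, v ∈ {1,…,n}. Then ⟨q_{ij}^{uv}, p⟩ = sin²(π/n)/2 for each p ∈ {p_{iu}, p_{iū}, p_{jv}, p_{j v̄}}, and ‖q_{ij}^{uv}‖² = sin²(π/n)/2. In particular, all constraint points q_{ij}^{uv} lie on the sphere of radius sin(π/n)/√2 centered at the origin, and the affine hyperplane of the 4-dimensional coordinate subspace spanned by planes i and j that passes through p_{iu}, p_{iū}, p_{jv}, p_{j v̄} is {x : ⟨q_{ij}^{uv}, x⟩ = ‖q_{ij}^{uv}‖²}, which touches that sphere exactly at q_{ij}^{uv}. -/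
open scoped RealInnerProductSpace
open Real

/-- The scaffolding point `p_{iu}` in `ℝ^{2k}`: its `i`-th coordinate pair is
`(cos((u−1)·2π/n), sin((u−1)·2π/n))` and its other coordinates are `0`. -/
noncomputable def scafPt (n k : ℕ) (i : Fin k) (u : ℕ) :
    EuclideanSpace ℝ (Fin (2 * k)) :=
  (WithLp.equiv 2 (Fin (2 * k) → ℝ)).symm fun idx =>
    if (idx : ℕ) = 2 * (i : ℕ) then Real.cos (((u : ℝ) - 1) * (2 * Real.pi) / n)
    else if (idx : ℕ) = 2 * (i : ℕ) + 1 then Real.sin (((u : ℝ) - 1) * (2 * Real.pi) / n)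
    else 0

/-- The scaffolding point set `P = {p_{iu} : 1 ≤ i ≤ k, 1 ≤ u ≤ n}`. -/
noncomputable def scafSet (n k : ℕ) : Set (EuclideanSpace ℝ (Fin (2 * k))) :=
  {x | ∃ i : Fin k, ∃ u ∈ Finset.Icc 1 n, x = scafPt n k i u}

/-- The antipodal partner `u' ∈ {1,…,n}` of `u ∈ {1,…,n}`: the unique element of
`{1,…,n}` congruent to `u + n/2` modulo `n`. -/
def antip (n u : ℕ) : ℕ := (u - 1 + n / 2) % n + 1

/-- The almost antipodal partner `ū ∈ {1,…,n}` of `u ∈ {1,…,n}`: the unique element of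
`{1,…,n}` congruent to `u + n/2 + 1` modulo `n`. -/
def almostAntip (n u : ℕ) : ℕ := (u - 1 + n / 2 + 1) % n + 1

/-- The half of the scaffolding set selected by a tuple `(u_1,…,u_k) ∈ {1,…,n}^k`:
`P(u_1,…,u_k) = {p_{it} : 1 ≤ i ≤ k, t ∈ {1,…,n}, t ≡ u_i − s (mod n)` for some
`s ∈ {0,…,n/2−1}}`. -/
noncomputable def scafHalf (n k : ℕ) (U : Fin k → ℕ) :
    Set (EuclideanSpace ℝ (Fin (2 * k))) :=
  {x | ∃ i : Fin k, ∃ t ∈ Finset.Icc 1 n,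
    (∃ s < n / 2, t + s ≡ U i [MOD n]) ∧ x = scafPt n k i t}

/-- The affine hyperplane `{x : ⟪a, x⟫ = b}`. -/
def hyp {k : ℕ} (a : EuclideanSpace ℝ (Fin (2 * k))) (b : ℝ) :
    Set (EuclideanSpace ℝ (Fin (2 * k))) := {x | ⟪a, x⟫ = b}

/-- The constraint point `q_{ij}^{uv}`: the centroid of `p_{iu}, p_{iū}, p_{jv}, p_{jv̄}`. -/
noncomputable def constrPt (n k : ℕ) (i j : Fin k) (u v : ℕ) :
    EuclideanSpace ℝ (Fin (2 * k)) :=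
  (1 / 4 : ℝ) • (scafPt n k i u + scafPt n k i (almostAntip n u)
    + scafPt n k j v + scafPt n k j (almostAntip n v))

private lemma scafPt_apply' (n k : ℕ) (i : Fin k) (u : ℕ) (idx : Fin (2 * k)) :
    scafPt n k i u idx =
      (if (idx : ℕ) = 2 * (i : ℕ) then Real.cos (((u : ℝ) - 1) * (2 * Real.pi) / n)
      else if (idx : ℕ) = 2 * (i : ℕ) + 1 then Real.sin (((u : ℝ) - 1) * (2 * Real.pi) / n)
      else 0) := rfl

private lemma inner_scafPt' (n k : ℕ) (i j : Fin k) (u v : ℕ) :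
    ⟪scafPt n k i u, scafPt n k j v⟫ =
      if i = j then
        Real.cos (((u : ℝ) - 1) * (2 * Real.pi) / n - ((v : ℝ) - 1) * (2 * Real.pi) / n)
      else 0 := by
  rw [PiLp.inner_apply]
  simp only [RCLike.inner_apply, starRingEnd_apply, star_trivial, scafPt_apply']
  by_cases h : i = j
  · subst h
    rw [if_pos rfl]
    have h1 : 2 * (i : ℕ) < 2 * k := by have := i.isLt; omega
    have h2 : 2 * (i : ℕ) + 1 < 2 * k := by have := i.isLt; omega
    rw [Fintype.sum_eq_add (⟨2 * (i : ℕ), h1⟩ : Fin (2 * k)) (⟨2 * (i : ℕ) + 1, h2⟩ : Fin (2 * k))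
      (by simp [Fin.ext_iff]) ?_]
    · simp [Real.cos_sub]
      ring
    · intro c hc
      have hc1 : (c : ℕ) ≠ 2 * (i : ℕ) := fun hh => hc.1 (Fin.ext hh)
      have hc2 : (c : ℕ) ≠ 2 * (i : ℕ) + 1 := fun hh => hc.2 (Fin.ext hh)
      simp [hc1, hc2]
  · rw [if_neg h]
    apply Finset.sum_eq_zero
    intro c _
    have hij : (i : ℕ) ≠ (j : ℕ) := fun hh => h (Fin.ext hh)
    split_ifs <;> simp_all <;> omega

private lemma cos_sub_almostAntip' (n u : ℕ) (hn : 4 ≤ n) (he : Even n) (hu : 1 ≤ u) :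
    Real.cos (((almostAntip n u : ℝ) - 1) * (2 * Real.pi) / n
      - ((u : ℝ) - 1) * (2 * Real.pi) / n) = - Real.cos (2 * (Real.pi / n)) := by
  obtain ⟨t, ht⟩ := he
  have hnt : (n : ℝ) = 2 * (t : ℝ) := by rw [ht]; push_cast; ring
  have ht0 : (t : ℝ) ≠ 0 := by exact_mod_cast (by omega : t ≠ 0)
  set w := almostAntip n u with hwdef
  set m := (u - 1 + n / 2 + 1) / n with hm
  have hkey : w + n * m = u + n / 2 + 1 := by
    have := Nat.mod_add_div (u - 1 + n / 2 + 1) n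
    simp only [hwdef, almostAntip, hm]
    omega
  have hn2 : n / 2 = t := by omega
  have hcast : (w : ℝ) + n * m = u + t + 1 := by
    have : (w : ℝ) + n * m = (u : ℝ) + (t : ℕ) + 1 := by
      rw [hn2] at hkey; exact_mod_cast hkey
    exact_mod_cast this
  have hangle : ((w : ℝ) - 1) * (2 * Real.pi) / n - ((u : ℝ) - 1) * (2 * Real.pi) / n
      = (Real.pi + 2 * (Real.pi / n)) + ((-(m : ℤ) : ℤ) : ℝ) * (2 * Real.pi) := by
    have hw : (w : ℝ) = u + t + 1 - n * m := by linarith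
    rw [hw, hnt]
    push_cast
    field_simp
    ring
  rw [hangle, Real.cos_add_int_mul_two_pi, Real.cos_add, Real.cos_pi, Real.sin_pi]
  ring

/-- The constraint point `q = q_{ij}^{uv}` satisfies
`⟪q, p⟫ = sin²(π/n)/2` for each of the four points `p_{iu}, p_{iū}, p_{jv}, p_{jv̄}`, and
`‖q‖² = sin²(π/n)/2`; so all constraint points lie on the sphere of radius `sin(π/n)/√2`
about the origin, and the affine hyperplane `{x : ⟪q, x⟫ = ‖q‖²}` of the coordinate
subspace spanned by planes `i` and `j` through the four points touches this sphere
exactly at `q`. -/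
theorem constrPt_tangency (n k : ℕ) (hn : 4 ≤ n) (hneven : Even n) (hk : 2 ≤ k)
    (i j : Fin k) (hij : i < j) (u v : ℕ)
    (hu : u ∈ Finset.Icc 1 n) (hv : v ∈ Finset.Icc 1 n) :
    (∀ p ∈ ({scafPt n k i u, scafPt n k i (almostAntip n u),
              scafPt n k j v, scafPt n k j (almostAntip n v)} :
        Set (EuclideanSpace ℝ (Fin (2 * k)))),
      ⟪constrPt n k i j u v, p⟫ = Real.sin (Real.pi / n) ^ 2 / 2)
    ∧ ‖constrPt n k i j u v‖ ^ 2 = Real.sin (Real.pi / n) ^ 2 / 2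
    ∧ (∀ x : EuclideanSpace ℝ (Fin (2 * k)),
        (∀ idx : Fin (2 * k), (idx : ℕ) ≠ 2 * (i : ℕ) → (idx : ℕ) ≠ 2 * (i : ℕ) + 1 →
          (idx : ℕ) ≠ 2 * (j : ℕ) → (idx : ℕ) ≠ 2 * (j : ℕ) + 1 → x idx = 0) →
        ⟪constrPt n k i j u v, x⟫ = ‖constrPt n k i j u v‖ ^ 2 →
        ‖x‖ ^ 2 = Real.sin (Real.pi / n) ^ 2 / 2 →
        x = constrPt n k i j u v) := by
  simp only [Finset.mem_Icc] at hu hv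
  have hij' : i ≠ j := ne_of_lt hij
  have hji' : j ≠ i := hij'.symm
  have hu1 : 1 ≤ u := hu.1
  have hv1 : 1 ≤ v := hv.1
  have hcc : Real.cos (2 * (Real.pi / n)) = 1 - 2 * Real.sin (Real.pi / n) ^ 2 := by
    have h1 := Real.cos_two_mul (Real.pi / n)
    have h2 := Real.sin_sq_add_cos_sq (Real.pi / n)
    nlinarith
  have hself : ∀ (l : Fin k) (w : ℕ), ⟪scafPt n k l w, scafPt n k l w⟫ = 1 := by
    intro l w; rw [inner_scafPt', if_pos rfl, sub_self, Real.cos_zero]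
  have hAA : ∀ (l : Fin k) (w : ℕ), 1 ≤ w →
      ⟪scafPt n k l (almostAntip n w), scafPt n k l w⟫ = - Real.cos (2 * (Real.pi / n)) := by
    intro l w hw; rw [inner_scafPt', if_pos rfl]; exact cos_sub_almostAntip' n w hn hneven hw
  have hAA' : ∀ (l : Fin k) (w : ℕ), 1 ≤ w →
      ⟪scafPt n k l w, scafPt n k l (almostAntip n w)⟫ = - Real.cos (2 * (Real.pi / n)) := by
    intro l w hw; rw [real_inner_comm]; exact hAA l w hw
  have hcross : ∀ (w w' : ℕ), ⟪scafPt n k i w, scafPt n k j w'⟫ = 0 := fun w w' => by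
    rw [inner_scafPt', if_neg hij']
  have hcross' : ∀ (w w' : ℕ), ⟪scafPt n k j w, scafPt n k i w'⟫ = 0 := fun w w' => by
    rw [inner_scafPt', if_neg hji']
  have expand : ∀ y : EuclideanSpace ℝ (Fin (2 * k)), ⟪constrPt n k i j u v, y⟫ =
      (1 / 4 : ℝ) * (⟪scafPt n k i u, y⟫ + ⟪scafPt n k i (almostAntip n u), y⟫
        + ⟪scafPt n k j v, y⟫ + ⟪scafPt n k j (almostAntip n v), y⟫) := by
    intro y
    rw [show constrPt n k i j u v = (1 / 4 : ℝ) • (scafPt n k i u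
      + scafPt n k i (almostAntip n u) + scafPt n k j v + scafPt n k j (almostAntip n v))
      from rfl, real_inner_smul_left, inner_add_left, inner_add_left, inner_add_left]
  have key : ∀ p ∈ ({scafPt n k i u, scafPt n k i (almostAntip n u),
              scafPt n k j v, scafPt n k j (almostAntip n v)} :
        Set (EuclideanSpace ℝ (Fin (2 * k)))),
      ⟪constrPt n k i j u v, p⟫ = Real.sin (Real.pi / n) ^ 2 / 2 := by
    intro p hp
    simp only [Set.mem_insert_iff, Set.mem_singleton_iff] at hp
    rcases hp with rfl | rfl | rfl | rfl
    · rw [expand, hself, hAA i u hu1, hcross', hcross']; linarith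
    · rw [expand, hself, hAA' i u hu1, hcross', hcross']; linarith
    · rw [expand, hself, hAA j v hv1, hcross, hcross]; linarith
    · rw [expand, hself, hAA' j v hv1, hcross, hcross]; linarith
  have hq2 : ‖constrPt n k i j u v‖ ^ 2 = Real.sin (Real.pi / n) ^ 2 / 2 := by
    rw [← real_inner_self_eq_norm_sq]
    nth_rewrite 2 [show constrPt n k i j u v = (1 / 4 : ℝ) • (scafPt n k i u
      + scafPt n k i (almostAntip n u) + scafPt n k j v + scafPt n k j (almostAntip n v))
      from rfl]
    rw [real_inner_smul_right, inner_add_right, inner_add_right, inner_add_right,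
      key _ (by simp), key _ (by simp), key _ (by simp), key _ (by simp)]
    ring
  refine ⟨key, hq2, ?_⟩
  intro x _ hinner hnorm
  have h0 : ‖x - constrPt n k i j u v‖ ^ 2 = 0 := by
    rw [norm_sub_sq_real]
    have hc : ⟪x, constrPt n k i j u v⟫ = ⟪constrPt n k i j u v, x⟫ :=
      real_inner_comm (constrPt n k i j u v) x
    rw [hc, hinner, hq2, hnorm]
    ring
  have h1 : x - constrPt n k i j u v = 0 := by
    have := pow_eq_zero_iff (two_ne_zero) |>.mp h0
    exact norm_eq_zero.mp this
  exact sub_eq_zero.mp h1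
end

section
/- Let n ≥ 4 be an even integer, k ≥ 2, 1 ≤ i < j ≤ k, let u, v ∈ {1,…,n}, and let (u_1,…,u_k) ∈ {1,…,n}^k with (u, v) ≠ (u_i, u_j). Then q_{ij}^{uv} lies strictly on the same side of the hyperplane H(u_1,…,u_k) as the origin: for every nonzero a ∈ ℝ^{2k} and b ∈ ℝ such that ⟨a, p_{m u_m}⟩ = b and ⟨a, p_{m ū_m}⟩ = b for all m ∈ {1,…,k}, one has b ≠ 0 and b·(⟨a, q_{ij}^{uv}⟩ − b) < 0. -/
open scoped RealInnerProductSpace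
open Real

-- index helpers
def idx0 {k : ℕ} (m : Fin k) : Fin (2 * k) := ⟨2 * m, by omega⟩
def idx1 {k : ℕ} (m : Fin k) : Fin (2 * k) := ⟨2 * m + 1, by omega⟩

lemma inner_scafPt (n k : ℕ) (m : Fin k) (t : ℕ) (a : EuclideanSpace ℝ (Fin (2 * k))) :
    ⟪a, scafPt n k m t⟫ =
      a (idx0 m) * Real.cos (((t : ℝ) - 1) * (2 * Real.pi) / n)
      + a (idx1 m) * Real.sin (((t : ℝ) - 1) * (2 * Real.pi) / n) := by
  set c := Real.cos (((t : ℝ) - 1) * (2 * Real.pi) / n)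
  set s := Real.sin (((t : ℝ) - 1) * (2 * Real.pi) / n)
  have h : ⟪a, scafPt n k m t⟫ = ∑ idx : Fin (2 * k),
      a idx * (if (idx : ℕ) = 2 * (m : ℕ) then c else if (idx : ℕ) = 2 * (m : ℕ) + 1 then s else 0) := by
    simp [scafPt, PiLp.inner_apply, RCLike.inner_apply]
    refine Finset.sum_congr rfl (fun x _ => ?_)
    split_ifs
    · exact mul_comm _ _
    · exact mul_comm _ _
    · rfl
  rw [h]
  have : ∀ idx : Fin (2 * k),
      a idx * (if (idx : ℕ) = 2 * (m : ℕ) then c else if (idx : ℕ) = 2 * (m : ℕ) + 1 then s else 0)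
      = (if idx = idx0 m then a (idx0 m) * c else 0)
        + (if idx = idx1 m then a (idx1 m) * s else 0) := by
    intro idx
    have hne : idx0 m ≠ idx1 m := by simp [idx0, idx1, Fin.ext_iff]
    by_cases h0 : (idx : ℕ) = 2 * (m : ℕ)
    · have e0 : idx = idx0 m := by apply Fin.ext; simpa [idx0] using h0
      rw [if_pos h0, e0, if_pos rfl, if_neg hne, add_zero]
    · have e0 : idx ≠ idx0 m := by intro h; exact h0 (by simpa [idx0] using congrArg Fin.val h)
      by_cases h1 : (idx : ℕ) = 2 * (m : ℕ) + 1
      · have e1 : idx = idx1 m := by apply Fin.ext; simpa [idx1] using h1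
        rw [if_neg h0, if_pos h1, e1, if_neg (Ne.symm hne), if_pos rfl, zero_add]
      · have e1 : idx ≠ idx1 m := by intro h; exact h1 (by simpa [idx1] using congrArg Fin.val h)
        rw [if_neg h0, if_neg h1, mul_zero, if_neg e0, if_neg e1, add_zero]
  rw [Finset.sum_congr rfl (fun idx _ => this idx), Finset.sum_add_distrib]
  simp

lemma almostAntip_angle (n t : ℕ) (hn : 4 ≤ n) (hneven : Even n) (ht : 1 ≤ t) :
    ∃ q : ℤ, ((almostAntip n t : ℝ) - 1) * (2 * Real.pi) / n
      = (((t : ℝ) - 1) * (2 * Real.pi) / n + Real.pi + 2 * (Real.pi / n)) - q * (2 * Real.pi) := by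
  obtain ⟨w, hw⟩ := hneven
  obtain ⟨q, r, hq, hr⟩ : ∃ q r, (t - 1 + n / 2 + 1) / n = q ∧ (t - 1 + n / 2 + 1) % n = r :=
    ⟨_, _, rfl, rfl⟩
  have hmod : r + n * q = t + w := by
    have h := Nat.mod_add_div (t - 1 + n / 2 + 1) n
    rw [hq, hr] at h
    omega
  have ha : almostAntip n t = r + 1 := by rw [almostAntip, hr]
  have hrr : (r : ℝ) = (t : ℝ) + w - n * q := by
    have : (r : ℝ) + n * q = (t : ℝ) + w := by exact_mod_cast hmod
    linarith
  have hnr : (n : ℝ) = 2 * w := by exact_mod_cast (by omega : n = 2 * w)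
  have hW : (0:ℝ) < (w : ℝ) := by
    have : 2 ≤ w := by omega
    positivity
  refine ⟨q, ?_⟩
  rw [ha]
  push_cast
  rw [hrr, hnr]
  field_simp
  ring

/-- Core trig computation. -/
lemma core_eq (c0 c1 b β θ0 δ : ℝ) (hβ : Real.cos β ≠ 0)
    (h1 : c0 * Real.cos θ0 + c1 * Real.sin θ0 = b)
    (h2 : c0 * Real.cos (θ0 + Real.pi + 2 * β) + c1 * Real.sin (θ0 + Real.pi + 2 * β) = b) :
    c0 * (Real.cos (θ0 + δ) + Real.cos (θ0 + δ + Real.pi + 2 * β))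
      + c1 * (Real.sin (θ0 + δ) + Real.sin (θ0 + δ + Real.pi + 2 * β))
      = 2 * b * Real.cos δ := by
  apply mul_left_cancel₀ hβ
  have e2 : (2 : ℝ) * β = β + β := by ring
  rw [e2] at h2 ⊢
  simp only [Real.cos_add, Real.sin_add, Real.cos_pi, Real.sin_pi] at h2 ⊢
  linear_combination (Real.cos β * Real.cos δ + Real.sin β * Real.sin δ) * h1
    + (Real.cos β * Real.cos δ - Real.sin β * Real.sin δ) * h2
    + (c1 * Real.sin θ0 * Real.sin β * Real.sin δ - c1 * Real.cos θ0 * Real.cos β * Real.sin δ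
       + c0 * Real.sin θ0 * Real.cos β * Real.sin δ + c0 * Real.cos θ0 * Real.sin β * Real.sin δ)
      * (Real.sin_sq_add_cos_sq β)

lemma core_zero (c0 c1 β θ0 : ℝ) (hβc : Real.cos β ≠ 0) (hβs : Real.sin β ≠ 0)
    (h1 : c0 * Real.cos θ0 + c1 * Real.sin θ0 = 0)
    (h2 : c0 * Real.cos (θ0 + Real.pi + 2 * β) + c1 * Real.sin (θ0 + Real.pi + 2 * β) = 0) :
    c0 = 0 ∧ c1 = 0 := by
  have e2 : (2 : ℝ) * β = β + β := by ring
  rw [e2] at h2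
  simp only [Real.cos_add, Real.sin_add, Real.cos_pi, Real.sin_pi] at h2
  have hprod : (2 : ℝ) * Real.sin β * Real.cos β ≠ 0 := by
    simp [hβc, hβs]
  constructor
  · have hc0 : c0 * (2 * Real.sin β * Real.cos β) = 0 := by
      linear_combination (-(-(Real.sin θ0 * (Real.cos β * Real.cos β - Real.sin β * Real.sin β)
          + Real.cos θ0 * (2 * Real.sin β * Real.cos β)))) * h1 + Real.sin θ0 * h2
        - 2 * c0 * Real.cos β * Real.sin β * (Real.sin_sq_add_cos_sq θ0)
    exact (mul_eq_zero.mp hc0).resolve_right hprod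
  · have hc1 : c1 * (2 * Real.sin β * Real.cos β) = 0 := by
      linear_combination (-(Real.cos θ0 * (Real.cos β * Real.cos β - Real.sin β * Real.sin β)
          - Real.sin θ0 * (2 * Real.sin β * Real.cos β))) * h1 - Real.cos θ0 * h2
        - 2 * c1 * Real.cos β * Real.sin β * (Real.sin_sq_add_cos_sq θ0)
    exact (mul_eq_zero.mp hc1).resolve_right hprod

/-- If `(u, v) ≠ (u_i, u_j)`, the constraint point `q_{ij}^{uv}` lies strictly on the same
side of the hyperplane `H(u_1,…,u_k)` (through the points `p_{m u_m}, p_{m ū_m}`) as the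
origin: for any equation `⟪a, ·⟫ = b` of that hyperplane, `b ≠ 0` and
`b·(⟪a, q_{ij}^{uv}⟫ − b) < 0`. -/
theorem constrPt_same_side_as_origin (n k : ℕ) (hn : 4 ≤ n) (hneven : Even n)
    (hk : 2 ≤ k) (i j : Fin k) (hij : i < j) (u v : ℕ)
    (hu : u ∈ Finset.Icc 1 n) (hv : v ∈ Finset.Icc 1 n)
    (U : Fin k → ℕ) (hU : ∀ m, U m ∈ Finset.Icc 1 n)
    (huv : (u, v) ≠ (U i, U j))
    (a : EuclideanSpace ℝ (Fin (2 * k))) (ha : a ≠ 0) (b : ℝ)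
    (hplane : ∀ m : Fin k, ⟪a, scafPt n k m (U m)⟫ = b ∧
      ⟪a, scafPt n k m (almostAntip n (U m))⟫ = b) :
    b ≠ 0 ∧ b * (⟪a, constrPt n k i j u v⟫ - b) < 0 := by
  simp only [constrPt]
  have hn0 : (0:ℝ) < n := by positivity
  have hπ := Real.pi_pos
  have hn4 : (4:ℝ) ≤ (n:ℝ) := by exact_mod_cast hn
  have hdivpos : 0 < Real.pi / n := by positivity
  have hβc : Real.cos (Real.pi / n) ≠ 0 := by
    have : 0 < Real.cos (Real.pi / n) := by
      apply Real.cos_pos_of_mem_Ioo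
      constructor
      · linarith
      · rw [div_lt_div_iff₀ hn0 (by norm_num : (0:ℝ) < 2)]
        nlinarith [mul_pos hπ (show (0:ℝ) < (n:ℝ) - 2 by linarith)]
    linarith
  have hβs : Real.sin (Real.pi / n) ≠ 0 := by
    have : 0 < Real.sin (Real.pi / n) := by
      apply Real.sin_pos_of_pos_of_lt_pi
      · positivity
      · rw [div_lt_iff₀ hn0]
        nlinarith [mul_pos hπ (show (0:ℝ) < (n:ℝ) - 1 by linarith)]
    linarith
  -- the two hyperplane equations, in trig form
  have hyps : ∀ m : Fin k,
      a (idx0 m) * Real.cos (((U m : ℝ) - 1) * (2 * Real.pi) / n)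
        + a (idx1 m) * Real.sin (((U m : ℝ) - 1) * (2 * Real.pi) / n) = b ∧
      a (idx0 m) * Real.cos ((((U m : ℝ) - 1) * (2 * Real.pi) / n) + Real.pi + 2 * (Real.pi / n))
        + a (idx1 m) * Real.sin ((((U m : ℝ) - 1) * (2 * Real.pi) / n) + Real.pi + 2 * (Real.pi / n)) = b := by
    intro m
    obtain ⟨h1, h2⟩ := hplane m
    rw [inner_scafPt] at h1 h2
    obtain ⟨q, hq⟩ := almostAntip_angle n (U m) hn hneven (Finset.mem_Icc.mp (hU m)).1
    rw [hq, Real.cos_sub_int_mul_two_pi, Real.sin_sub_int_mul_two_pi] at h2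
    exact ⟨h1, h2⟩
  have hbne : b ≠ 0 := by
    intro hb0
    apply ha
    have hz : ∀ m : Fin k, a (idx0 m) = 0 ∧ a (idx1 m) = 0 := by
      intro m
      obtain ⟨h1, h2⟩ := hyps m
      rw [hb0] at h1 h2
      exact core_zero _ _ _ _ hβc hβs h1 h2
    ext idx
    have hlt := idx.isLt
    have m : Fin k := ⟨(idx : ℕ) / 2, by omega⟩
    have hcase : (idx : ℕ) = 2 * ((idx : ℕ) / 2) ∨ (idx : ℕ) = 2 * ((idx : ℕ) / 2) + 1 := by omega
    rcases hcase with h | h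
    · have : idx = idx0 (⟨(idx : ℕ) / 2, by omega⟩ : Fin k) := Fin.ext (by simpa [idx0] using h)
      rw [this]
      exact (hz _).1
    · have : idx = idx1 (⟨(idx : ℕ) / 2, by omega⟩ : Fin k) := Fin.ext (by simpa [idx1] using h)
      rw [this]
      exact (hz _).2
  -- key sum formula
  have key : ∀ (m : Fin k) (t : ℕ), 1 ≤ t →
      ⟪a, scafPt n k m t⟫ + ⟪a, scafPt n k m (almostAntip n t)⟫
        = 2 * b * Real.cos (((t : ℝ) - (U m : ℝ)) * (2 * Real.pi) / n) := by
    intro m t ht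
    obtain ⟨h1, h2⟩ := hyps m
    obtain ⟨q', hq'⟩ := almostAntip_angle n t hn hneven ht
    have hθ : ((t : ℝ) - 1) * (2 * Real.pi) / n
        = (((U m : ℝ) - 1) * (2 * Real.pi) / n) + (((t : ℝ) - (U m : ℝ)) * (2 * Real.pi) / n) := by
      field_simp
      ring
    rw [inner_scafPt, inner_scafPt, hq', Real.cos_sub_int_mul_two_pi,
      Real.sin_sub_int_mul_two_pi, hθ]
    have := core_eq (a (idx0 m)) (a (idx1 m)) b (Real.pi / n)
      (((U m : ℝ) - 1) * (2 * Real.pi) / n) (((t : ℝ) - (U m : ℝ)) * (2 * Real.pi) / n)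
      hβc h1 h2
    linarith
  refine ⟨hbne, ?_⟩
  set Di := Real.cos (((u : ℝ) - (U i : ℝ)) * (2 * Real.pi) / n) with hDi
  set Dj := Real.cos (((v : ℝ) - (U j : ℝ)) * (2 * Real.pi) / n) with hDj
  have hinner : ⟪a, (1 / 4 : ℝ) • (scafPt n k i u + scafPt n k i (almostAntip n u)
      + scafPt n k j v + scafPt n k j (almostAntip n v))⟫
      = (1/4) * ((2 * b * Di) + (2 * b * Dj)) := by
    rw [real_inner_smul_right, inner_add_right, inner_add_right, inner_add_right]
    rw [show ⟪a, scafPt n k i u⟫ + ⟪a, scafPt n k i (almostAntip n u)⟫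
        + ⟪a, scafPt n k j v⟫ + ⟪a, scafPt n k j (almostAntip n v)⟫
      = (⟪a, scafPt n k i u⟫ + ⟪a, scafPt n k i (almostAntip n u)⟫)
        + (⟪a, scafPt n k j v⟫ + ⟪a, scafPt n k j (almostAntip n v)⟫) by ring]
    rw [key i u (Finset.mem_Icc.mp hu).1, key j v (Finset.mem_Icc.mp hv).1]
  -- strict cosine bound
  have coslt : ∀ s w : ℕ, s ∈ Finset.Icc 1 n → w ∈ Finset.Icc 1 n → s ≠ w →
      Real.cos (((s : ℝ) - (w : ℝ)) * (2 * Real.pi) / n) < 1 := by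
    intro s w hs hw hne
    obtain ⟨hs1, hs2⟩ := Finset.mem_Icc.mp hs
    obtain ⟨hw1, hw2⟩ := Finset.mem_Icc.mp hw
    have hs1' : (1:ℝ) ≤ s := by exact_mod_cast hs1
    have hs2' : (s:ℝ) ≤ n := by exact_mod_cast hs2
    have hw1' : (1:ℝ) ≤ w := by exact_mod_cast hw1
    have hw2' : (w:ℝ) ≤ n := by exact_mod_cast hw2
    rcases (Real.cos_le_one (((s : ℝ) - (w : ℝ)) * (2 * Real.pi) / n)).lt_or_eq with h | h
    · exact h
    exfalso
    have hlow : -(2 * Real.pi) < ((s : ℝ) - (w : ℝ)) * (2 * Real.pi) / n := by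
      rw [lt_div_iff₀ hn0]
      nlinarith [mul_pos (show (0:ℝ) < (s:ℝ) - w + n by linarith) hπ]
    have hhigh : ((s : ℝ) - (w : ℝ)) * (2 * Real.pi) / n < 2 * Real.pi := by
      rw [div_lt_iff₀ hn0]
      nlinarith [mul_pos (show (0:ℝ) < (w:ℝ) - s + n by linarith) hπ]
    have h0 := (Real.cos_eq_one_iff_of_lt_of_lt hlow hhigh).mp h
    have h1 : (s:ℝ) - w = 0 := by
      rcases mul_eq_zero.mp ((div_eq_zero_iff.mp h0).resolve_right (ne_of_gt hn0)) with h' | h'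
      · exact h'
      · exfalso; nlinarith
    have : s = w := by
      have : (s:ℝ) = w := by linarith
      exact_mod_cast this
    exact hne this
  have hne2 : u ≠ U i ∨ v ≠ U j := by
    by_contra hcon
    push_neg at hcon
    exact huv (by rw [hcon.1, hcon.2])
  have hb2 : 0 < b * b := mul_self_pos.mpr hbne
  have hDi_le : Di ≤ 1 := Real.cos_le_one _
  have hDj_le : Dj ≤ 1 := Real.cos_le_one _
  rw [hinner]
  rcases hne2 with h | h
  · have hDi_lt : Di < 1 := coslt u (U i) hu (hU i) h
    nlinarith [mul_pos hb2 (show (0:ℝ) < 2 - Di - Dj by linarith)]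
  · have hDj_lt : Dj < 1 := coslt v (U j) hv (hU j) h
    nlinarith [mul_pos hb2 (show (0:ℝ) < 2 - Di - Dj by linarith)]
end
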